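/- For every finite set R ∈ 𝒲 and every x ∈ V_{2,g} with ℙ[R̃_norm = R and ι = x] > 0: (i) Ū₀(g,gR|1) = ℙ_g[S_{gR} = ∞ and X_n ∈ C(g) for all n ≥ 1]; (ii) Ū₁(gx,gR|1) = ℙ_{gx}[S_{gR} = ∞ and X_n ∉ C(gx) for all n ≥ 1]. -/

import Mathlib

open MeasureTheory Filter ProbabilityTheory
open scoped ENNReal NNReal

noncomputable section

namespace CapFP

/-- A letter of the free product `V₁ ∗ V₂`: an element of `V₁∖{o₁}` or of `V₂∖{o₂}`. -/
abbrev Letter (α β : Type) (o₁ : α) (o₂ : β) : Type :=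
  {a : α // a ≠ o₁} ⊕ {b : β // b ≠ o₂}

/-- The index (1 or 2) of the free factor a letter belongs to. -/
def Letter.side {α β : Type} {o₁ : α} {o₂ : β} (l : Letter α β o₁ o₂) : ℕ :=
  Sum.elim (fun _ => 1) (fun _ => 2) l

/-- No two consecutive letters come from the same free factor. -/
def Alternating {α β : Type} {o₁ : α} {o₂ : β} (w : List (Letter α β o₁ o₂)) : Prop :=
  w.Chain' fun x y => Letter.side x ≠ Letter.side y

/-- The free product `V = V₁ ∗ V₂`, realized as the set of alternating words
over the alphabet `(V₁∖{o₁}) ∪ (V₂∖{o₂})`. -/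
abbrev Word (α β : Type) (o₁ : α) (o₂ : β) : Type :=
  {w : List (Letter α β o₁ o₂) // Alternating w}

variable {α β : Type} {o₁ : α} {o₂ : β}

instance : MeasurableSpace (Word α β o₁ o₂) := ⊤

/-- The empty word `o`. -/
def emptyWord : Word α β o₁ o₂ := ⟨[], List.isChain_nil⟩

/-- Word length `‖u‖`. -/
def wlen (u : Word α β o₁ o₂) : ℕ := u.val.length

/-- The type `t(u)` of a word: the side of its last letter, `0` for the empty word. -/
def wtype (u : Word α β o₁ o₂) : ℕ := u.val.getLast?.elim 0 Letter.side

/-- The side of the first letter of a word, `0` for the empty word. -/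
def wfirst (u : Word α β o₁ o₂) : ℕ := u.val.head?.elim 0 Letter.side

/-- The cone `C(x) = {y : x is a prefix of y}`. -/
def cone (x : Word α β o₁ o₂) : Set (Word α β o₁ o₂) := {y | x.val <+: y.val}

/-- The one–letter word. -/
def letterWord (l : Letter α β o₁ o₂) : Word α β o₁ o₂ := ⟨[l], List.isChain_singleton l⟩

/-- Embedding of `V₁` into (lists of letters of) the free product: `o₁` ↦ empty word. -/
def incl1 (o₁ : α) (o₂ : β) [DecidableEq α] (v : α) : List (Letter α β o₁ o₂) :=
  if h : v = o₁ then [] else [Sum.inl ⟨v, h⟩]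

/-- Embedding of `V₂` into (lists of letters of) the free product: `o₂` ↦ empty word. -/
def incl2 (o₁ : α) (o₂ : β) [DecidableEq β] (v : β) : List (Letter α β o₁ o₂) :=
  if h : v = o₂ then [] else [Sum.inr ⟨v, h⟩]

attribute [local instance] Classical.propDecidable

/-- The lift `P̄₁` of `P₁` to the free product: `p̄₁(xv, xw) = p₁(v,w)` for `t(x) ≠ 1`,
`v, w ∈ V₁`, and `0` otherwise. -/
def pbar1 (o₁ : α) (o₂ : β) [DecidableEq α] (p₁ : α → α → ℝ) (x y : Word α β o₁ o₂) : ℝ :=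
  ∑' (w : Word α β o₁ o₂) (v : α) (v' : α),
    if wtype w ≠ 1 ∧ x.val = w.val ++ incl1 o₁ o₂ v ∧ y.val = w.val ++ incl1 o₁ o₂ v'
    then p₁ v v' else 0

/-- The lift `P̄₂` of `P₂` to the free product. -/
def pbar2 (o₁ : α) (o₂ : β) [DecidableEq β] (p₂ : β → β → ℝ) (x y : Word α β o₁ o₂) : ℝ :=
  ∑' (w : Word α β o₁ o₂) (v : β) (v' : β),
    if wtype w ≠ 2 ∧ x.val = w.val ++ incl2 o₁ o₂ v ∧ y.val = w.val ++ incl2 o₁ o₂ v'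
    then p₂ v v' else 0

/-- `n`-step transition "probabilities" of a kernel `p`. -/
def nstep {γ : Type} [DecidableEq γ] (p : γ → γ → ℝ) : ℕ → γ → γ → ℝ
  | 0, x, y => if x = y then 1 else 0
  | n + 1, x, y => ∑' z : γ, nstep p n x z * p z y

/-- The standing setup: a free product of two (at most countable) rooted transition
graphs, with the convex-combination random walk `P = α·P̄₁ + (1-α)·P̄₂` on it, realized
as the family of path measures `μ x` (law of the chain started at `x`). -/
structure Setup (α β : Type) [DecidableEq α] [DecidableEq β] (o₁ : α) (o₂ : β) where
  countable₁ : Countable α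
  countable₂ : Countable β
  /-- `V₁` has at least two elements. -/
  two₁ : ∃ u : α, u ≠ o₁
  /-- `V₂` has at least two elements. -/
  two₂ : ∃ u : β, u ≠ o₂
  /-- Not both factors have exactly two elements. -/
  not_both_two : ¬(Nat.card α = 2 ∧ Nat.card β = 2)
  p₁ : α → α → ℝ
  p₂ : β → β → ℝ
  p₁_nonneg : ∀ x y, 0 ≤ p₁ x y
  p₂_nonneg : ∀ x y, 0 ≤ p₂ x y
  p₁_rowsum : ∀ x, HasSum (p₁ x) 1
  p₂_rowsum : ∀ x, HasSum (p₂ x) 1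
  p₁_noloop : ∀ x, p₁ x x = 0
  p₂_noloop : ∀ x, p₂ x x = 0
  p₁_reach : ∀ x : α, ∃ n : ℕ, 0 < nstep p₁ n o₁ x
  p₂_reach : ∀ x : β, ∃ n : ℕ, 0 < nstep p₂ n o₂ x
  /-- the weight `α ∈ (0,1)` of the convex combination. -/
  a : ℝ
  a_mem : a ∈ Set.Ioo (0 : ℝ) 1
  /-- `μ x` is the law of the random walk `(X_n)` with transition matrix
  `P = a·P̄₁ + (1-a)·P̄₂` started at `x`. -/
  μ : Word α β o₁ o₂ → Measure (ℕ → Word α β o₁ o₂)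
  μ_prob : ∀ x, IsProbabilityMeasure (μ x)
  μ_start : ∀ x, μ x {ω | ω 0 = x} = 1
  μ_cyl : ∀ (x : Word α β o₁ o₂) (n : ℕ) (w : ℕ → Word α β o₁ o₂),
    μ x {ω | ∀ i ≤ n, ω i = w i} =
      ENNReal.ofReal (if w 0 = x then
        ∏ i ∈ Finset.range n,
          (a * pbar1 o₁ o₂ p₁ (w i) (w (i + 1)) + (1 - a) * pbar2 o₁ o₂ p₂ (w i) (w (i + 1)))
        else 0)

variable [DecidableEq α] [DecidableEq β]

/-- The transition matrix `P` on the free product. -/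
def Setup.P (S : Setup α β o₁ o₂) (x y : Word α β o₁ o₂) : ℝ :=
  S.a * pbar1 o₁ o₂ S.p₁ x y + (1 - S.a) * pbar2 o₁ o₂ S.p₂ x y

/-- The spectral radius `ρ = limsup_n ℙ_o[X_n = o]^{1/n}`. -/
def Setup.rho (S : Setup α β o₁ o₂) : ℝ :=
  Filter.limsup
    (fun n : ℕ => (S.μ emptyWord {ω | ω n = emptyWord}).toReal ^ (1 / (n : ℝ))) atTop

/-- The event `S_A = ∞`, i.e. the walk never hits `A` at a time `≥ 1`. -/
def neverHit (A : Set (Word α β o₁ o₂)) : Set (ℕ → Word α β o₁ o₂) :=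
  {ω | ∀ m, 1 ≤ m → ω m ∉ A}

/-- The capacity `Cap(A) = Σ_{x∈A} ℙ_x[S_A = ∞]`. -/
def Setup.Cap (S : Setup α β o₁ o₂) (A : Set (Word α β o₁ o₂)) : ℝ :=
  ∑' x : A, (S.μ ↑x (neverHit A)).toReal

/-- The range `R_n(ω) = {ω 0, …, ω n}`. -/
def rangeSet (ω : ℕ → Word α β o₁ o₂) (n : ℕ) : Set (Word α β o₁ o₂) :=
  {x | ∃ i ≤ n, ω i = x}

/-- The exit times: `e₀ = 0` and
`e_k = inf{m > 0 : ‖ω m‖ = k and ω n ∈ C(ω m) for all n ≥ m}`. -/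
def exitTime (ω : ℕ → Word α β o₁ o₂) : ℕ → ℕ
  | 0 => 0
  | k + 1 => sInf {m | 0 < m ∧ wlen (ω m) = k + 1 ∧ ∀ n ≥ m, ω n ∈ cone (ω m)}

/-- The set `K₀` of words starting with a letter of `V_{t(X_{e₁})}`, together with `o`. -/
def K0 (ω : ℕ → Word α β o₁ o₂) : Set (Word α β o₁ o₂) :=
  {y | y = emptyWord ∨ wfirst y = wtype (ω (exitTime ω 1))}

/-- The interior parts `R_k^{(I)}` of the range between consecutive exit points. -/
def RI (ω : ℕ → Word α β o₁ o₂) : ℕ → Set (Word α β o₁ o₂)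
  | 0 => rangeSet ω (exitTime ω 1) ∩ (K0 ω \ (cone (ω (exitTime ω 1)) ∪ {emptyWord}))
  | k + 1 => rangeSet ω (exitTime ω (k + 2)) ∩
      (cone (ω (exitTime ω (k + 1))) \ (cone (ω (exitTime ω (k + 2))) ∪ {ω (exitTime ω (k + 1))}))

/-- The sets `R_k`. -/
def Rset (ω : ℕ → Word α β o₁ o₂) : ℕ → Set (Word α β o₁ o₂)
  | 0 => RI ω 0 ∪ {emptyWord, ω (exitTime ω 1)}
  | k + 1 => RI ω (k + 1) ∪ {ω (exitTime ω (k + 1)), ω (exitTime ω (k + 2))}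

/-- `C_k^{(I)} = Σ_{x ∈ R_k^{(I)}} ℙ_x[S_{R_k} = ∞]`. -/
def CI (S : Setup α β o₁ o₂) (ω : ℕ → Word α β o₁ o₂) (k : ℕ) : ℝ :=
  ∑' x : RI ω k, (S.μ ↑x (neverHit (Rset ω k))).toReal

/-- The quantities `C_k`. -/
def Cfun (S : Setup α β o₁ o₂) (ω : ℕ → Word α β o₁ o₂) : ℕ → ℝ
  | 0 => CI S ω 0
      + (S.μ emptyWord (neverHit (Rset ω 0) ∩ {ω' | ∀ n, 1 ≤ n → ω' n ∈ K0 ω})).toReal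
      + (S.μ (ω (exitTime ω 1))
          (neverHit (Rset ω 0) ∩ {ω' | ∀ n, 1 ≤ n → ω' n ∉ cone (ω (exitTime ω 1))})).toReal
  | k + 1 => CI S ω (k + 1)
      + (S.μ (ω (exitTime ω (k + 1)))
          (neverHit (Rset ω (k + 1)) ∩ {ω' | ∀ n, 1 ≤ n → ω' n ∈ cone (ω (exitTime ω (k + 1)))})).toReal
      + (S.μ (ω (exitTime ω (k + 2)))
          (neverHit (Rset ω (k + 1)) ∩ {ω' | ∀ n, 1 ≤ n → ω' n ∉ cone (ω (exitTime ω (k + 2)))})).toReal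

/-- The quantity `C₀*`. -/
def C0star (S : Setup α β o₁ o₂) (ω : ℕ → Word α β o₁ o₂) : ℝ :=
  (∑' x : ↥(rangeSet ω (exitTime ω 1) \ K0 ω),
      (S.μ ↑x (neverHit (rangeSet ω (exitTime ω 1)))).toReal)
  + (S.μ emptyWord
      (neverHit (rangeSet ω (exitTime ω 1)) ∩ {ω' | ∀ n, 1 ≤ n → ω' n ∉ K0 ω})).toReal

/-- The quantity `O_k`. -/
def Ofun (S : Setup α β o₁ o₂) (ω : ℕ → Word α β o₁ o₂) (k : ℕ) : ℝ :=
  (∑' x : ↥((rangeSet ω (exitTime ω k) ∩ cone (ω (exitTime ω k))) \ {ω (exitTime ω k)}),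
      (S.μ ↑x (neverHit (rangeSet ω (exitTime ω k)))).toReal)
  + (S.μ (ω (exitTime ω k))
      (neverHit (rangeSet ω (exitTime ω k)) ∩
        {ω' | ∀ n, 1 ≤ n → ω' n ∈ cone (ω (exitTime ω k))})).toReal

/-- First visit time `T_x`. -/
def firstVisit (ω : ℕ → Word α β o₁ o₂) (x : Word α β o₁ o₂) : ℕ :=
  sInf {m | ω m = x}

/-- The regeneration times `τ_k` (w.r.t. the fixed letter `g ∈ V₁∖{o₁}`):
times `m` at which `W_m = g` (the word at the exit time ends with `g`) and the exit
point is visited for the first time at the exit time. -/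
def tau (g : {u : α // u ≠ o₁}) (ω : ℕ → Word α β o₁ o₂) : ℕ → ℕ
  | 0 => sInf {m | 1 ≤ m ∧ (ω (exitTime ω m)).val.getLast? = some (Sum.inl g)
      ∧ exitTime ω m = firstVisit ω (ω (exitTime ω m))}
  | k + 1 => sInf {m | tau g ω k < m ∧ (ω (exitTime ω m)).val.getLast? = some (Sum.inl g)
      ∧ exitTime ω m = firstVisit ω (ω (exitTime ω m))}

/-- `T_k = e_{τ_k}`. -/
def Tk (g : {u : α // u ≠ o₁}) (ω : ℕ → Word α β o₁ o₂) (k : ℕ) : ℕ :=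
  exitTime ω (tau g ω k)

/-- `C̃_i = Σ_{j=τ_{i-1}}^{τ_i - 1} C_j` (meaningful for `i ≥ 1`). -/
def Ctilde (S : Setup α β o₁ o₂) (g : {u : α // u ≠ o₁}) (ω : ℕ → Word α β o₁ o₂) (i : ℕ) : ℝ :=
  ∑ j ∈ Finset.Ico (tau g ω (i - 1)) (tau g ω i), Cfun S ω j

/-- `D_i = C̃_i − c·(T_i − T_{i-1})` (meaningful for `i ≥ 1`). -/
def Dfun (S : Setup α β o₁ o₂) (g : {u : α // u ≠ o₁}) (c : ℝ)
    (ω : ℕ → Word α β o₁ o₂) (i : ℕ) : ℝ :=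
  Ctilde S g ω i - c * ((Tk g ω i : ℝ) - (Tk g ω (i - 1) : ℝ))

/-- `𝔖̃_k = Σ_{i=1}^k C̃_i`. -/
def Stilde (S : Setup α β o₁ o₂) (g : {u : α // u ≠ o₁}) (ω : ℕ → Word α β o₁ o₂) (k : ℕ) : ℝ :=
  ∑ i ∈ Finset.Icc 1 k, Ctilde S g ω i

/-- `t(n) = sup{m : T_m ≤ n}`. -/
def tcount (g : {u : α // u ≠ o₁}) (ω : ℕ → Word α β o₁ o₂) (n : ℕ) : ℕ :=
  sSup {m | Tk g ω m ≤ n}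

/-- The Green function `G(x,y|z) = Σ_n ℙ_x[X_n = y] z^n` (as an extended real). -/
def Ggf (S : Setup α β o₁ o₂) (x y : Word α β o₁ o₂) (z : ℝ) : ℝ≥0∞ :=
  ∑' n : ℕ, S.μ x {ω | ω n = y} * ENNReal.ofReal (z ^ n)

/-- The last-visit generating function
`L(x,y|z) = Σ_n ℙ_x[X_n = y, X_k ≠ x ∀ k < n] z^n` (as an extended real). -/
def Lgf (S : Setup α β o₁ o₂) (x y : Word α β o₁ o₂) (z : ℝ) : ℝ≥0∞ :=
  ∑' n : ℕ, S.μ x {ω | ω n = y ∧ ∀ k < n, ω k ≠ x} * ENNReal.ofReal (z ^ n)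

/-- `U(x,R|z) = Σ_{n≥1} ℙ_x[S_R = n] z^n` (as an extended real). -/
def Ugf (S : Setup α β o₁ o₂) (x : Word α β o₁ o₂) (R : Set (Word α β o₁ o₂)) (z : ℝ) : ℝ≥0∞ :=
  ∑' n : ℕ,
    (if 1 ≤ n then S.μ x {ω | ω n ∈ R ∧ ∀ m, 1 ≤ m → m < n → ω m ∉ R} else 0)
    * ENNReal.ofReal (z ^ n)

/-- The normalized range between regeneration times:
`R̃₁ = R_{T₁} ∩ (C(X_{T₀}) ∖ (C(X_{T₁}) ∖ {X_{T₁}}))`. -/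
def Rtilde1 (g : {u : α // u ≠ o₁}) (ω : ℕ → Word α β o₁ o₂) : Set (Word α β o₁ o₂) :=
  rangeSet ω (Tk g ω 1) ∩
    (cone (ω (Tk g ω 0)) \ (cone (ω (Tk g ω 1)) \ {ω (Tk g ω 1)}))

/-- `R̃_norm = {w : X_{T₀}·w ∈ R̃₁}`. -/
def Rnorm (g : {u : α // u ≠ o₁}) (ω : ℕ → Word α β o₁ o₂) : Set (Word α β o₁ o₂) :=
  {w | ∃ u ∈ Rtilde1 g ω, u.val = (ω (Tk g ω 0)).val ++ w.val}

/-- `V_{2,g}`: words starting with a letter of `V₂∖{o₂}` and ending with `g`,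
with no other occurrence of `g`. -/
def V2g (g : {u : α // u ≠ o₁}) : Set (Word α β o₁ o₂) :=
  {v | wfirst v = 2 ∧ v.val.getLast? = some (Sum.inl g) ∧
    ∀ l ∈ v.val.dropLast, l ≠ Sum.inl g}

/-- `gR = {g·w : w ∈ R}`. -/
def gSet (g : {u : α // u ≠ o₁}) (R : Set (Word α β o₁ o₂)) : Set (Word α β o₁ o₂) :=
  {u | ∃ w ∈ R, u.val = Sum.inl g :: w.val}

/-- `U₀(g, gR | z) = Σ_{n≥1} ℙ_g[S_{gR} = n, X_m ∈ C(g) ∀ m ≤ n] z^n`. -/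
def U0real (S : Setup α β o₁ o₂) (g : {u : α // u ≠ o₁})
    (R : Set (Word α β o₁ o₂)) (z : ℝ) : ℝ :=
  ∑' n : ℕ,
    (if 1 ≤ n then
      (S.μ (letterWord (Sum.inl g))
        {ω | ω n ∈ R ∧ (∀ m, 1 ≤ m → m < n → ω m ∉ R) ∧
          ∀ m ≤ n, ω m ∈ cone (letterWord (Sum.inl g))}).toReal
    else 0) * z ^ n

/-- `U₁(gx, gR | z) = Σ_{n≥1} ℙ_{gx}[S_{gR} = n, X_m ∉ C(gx) ∀ 1 ≤ m ≤ n-1] z^n`. -/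
def U1real (S : Setup α β o₁ o₂) (gx : Word α β o₁ o₂)
    (R : Set (Word α β o₁ o₂)) (z : ℝ) : ℝ :=
  ∑' n : ℕ,
    (if 1 ≤ n then
      (S.μ gx
        {ω | ω n ∈ R ∧ (∀ m, 1 ≤ m → m < n → ω m ∉ R) ∧
          ∀ m, 1 ≤ m → m < n → ω m ∉ cone gx}).toReal
    else 0) * z ^ n


/-! ### Auxiliary lemmas -/

section AuxLemmas

variable {α β : Type} {o₁ : α} {o₂ : β}

set_option linter.unusedSectionVars false

lemma side_inl (a : {a : α // a ≠ o₁}) :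
    Letter.side (o₁ := o₁) (o₂ := o₂) (Sum.inl a) = 1 := rfl

lemma side_inr (b : {b : β // b ≠ o₂}) :
    Letter.side (o₁ := o₁) (o₂ := o₂) (Sum.inr b) = 2 := rfl

variable [DecidableEq α] [DecidableEq β]

lemma incl1_len (v : α) : (incl1 o₁ o₂ v : List (Letter α β o₁ o₂)).length ≤ 1 := by
  unfold incl1; split <;> simp

lemma incl2_len (v : β) : (incl2 o₁ o₂ v : List (Letter α β o₁ o₂)).length ≤ 1 := by
  unfold incl2; split <;> simp

lemma incl1_injective : Function.Injective (incl1 o₁ o₂ : α → List (Letter α β o₁ o₂)) := by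
  intro a b h
  unfold incl1 at h
  split at h <;> split at h <;> simp_all

lemma incl2_injective : Function.Injective (incl2 o₁ o₂ : β → List (Letter α β o₁ o₂)) := by
  intro a b h
  unfold incl2 at h
  split at h <;> split at h <;> simp_all

/-- An admissible step of the walk: both words share a common prefix `w` and differ only
in a (possibly empty) final block of length at most one, and the two blocks differ. -/
def GoodStep (u v : Word α β o₁ o₂) : Prop :=
  ∃ (w d d' : List (Letter α β o₁ o₂)), u.val = w ++ d ∧ v.val = w ++ d' ∧
    d.length ≤ 1 ∧ d'.length ≤ 1 ∧ d ≠ d'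

lemma GoodStep.symm {u v : Word α β o₁ o₂} (h : GoodStep u v) : GoodStep v u := by
  obtain ⟨w, d, d', h1, h2, h3, h4, h5⟩ := h
  exact ⟨w, d', d, h2, h1, h4, h3, fun he => h5 he.symm⟩

lemma not_goodStep_self (u : Word α β o₁ o₂) : ¬ GoodStep u u := by
  rintro ⟨w, d, d', h1, h2, -, -, hne⟩
  exact hne (List.append_cancel_left (h1 ▸ h2))

omit [DecidableEq β] in
lemma pbar1_eq_zero {p₁ : α → α → ℝ} (hnl : ∀ x, p₁ x x = 0) {u v : Word α β o₁ o₂}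
    (h : ¬ GoodStep u v) : pbar1 o₁ o₂ p₁ u v = 0 := by
  unfold pbar1
  have hterm : ∀ (w : Word α β o₁ o₂) (a b : α),
      (if wtype w ≠ 1 ∧ u.val = w.val ++ incl1 o₁ o₂ a ∧ v.val = w.val ++ incl1 o₁ o₂ b
       then p₁ a b else 0) = 0 := by
    intro w a b
    split
    · rename_i hc
      by_cases hab : a = b
      · subst hab; exact hnl a
      · exact absurd ⟨w.val, incl1 o₁ o₂ a, incl1 o₁ o₂ b, hc.2.1, hc.2.2, incl1_len a,
          incl1_len b, fun he => hab (incl1_injective he)⟩ h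
    · rfl
  exact (tsum_congr fun w => (tsum_congr fun a =>
    (tsum_congr fun b => hterm w a b).trans tsum_zero).trans tsum_zero).trans tsum_zero

omit [DecidableEq α] in
lemma pbar2_eq_zero {p₂ : β → β → ℝ} (hnl : ∀ x, p₂ x x = 0) {u v : Word α β o₁ o₂}
    (h : ¬ GoodStep u v) : pbar2 o₁ o₂ p₂ u v = 0 := by
  unfold pbar2
  have hterm : ∀ (w : Word α β o₁ o₂) (a b : β),
      (if wtype w ≠ 2 ∧ u.val = w.val ++ incl2 o₁ o₂ a ∧ v.val = w.val ++ incl2 o₁ o₂ b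
       then p₂ a b else 0) = 0 := by
    intro w a b
    split
    · rename_i hc
      by_cases hab : a = b
      · subst hab; exact hnl a
      · exact absurd ⟨w.val, incl2 o₁ o₂ a, incl2 o₁ o₂ b, hc.2.1, hc.2.2, incl2_len a,
          incl2_len b, fun he => hab (incl2_injective he)⟩ h
    · rfl
  exact (tsum_congr fun w => (tsum_congr fun a =>
    (tsum_congr fun b => hterm w a b).trans tsum_zero).trans tsum_zero).trans tsum_zero

omit [DecidableEq β] in
lemma pbar1_nonneg {p₁ : α → α → ℝ} (hp : ∀ a b, 0 ≤ p₁ a b) (u v : Word α β o₁ o₂) :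
    0 ≤ pbar1 o₁ o₂ p₁ u v := by
  unfold pbar1
  refine tsum_nonneg fun w => tsum_nonneg fun a => tsum_nonneg fun b => ?_
  split
  · exact hp a b
  · exact le_refl 0

omit [DecidableEq α] in
lemma pbar2_nonneg {p₂ : β → β → ℝ} (hp : ∀ a b, 0 ≤ p₂ a b) (u v : Word α β o₁ o₂) :
    0 ≤ pbar2 o₁ o₂ p₂ u v := by
  unfold pbar2
  refine tsum_nonneg fun w => tsum_nonneg fun a => tsum_nonneg fun b => ?_
  split
  · exact hp a b
  · exact le_refl 0

lemma step_goodStep (S : Setup α β o₁ o₂) {u v : Word α β o₁ o₂}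
    (h : S.a * pbar1 o₁ o₂ S.p₁ u v + (1 - S.a) * pbar2 o₁ o₂ S.p₂ u v ≠ 0) :
    GoodStep u v := by
  by_contra hg
  rw [pbar1_eq_zero S.p₁_noloop hg, pbar2_eq_zero S.p₂_noloop hg] at h
  simp at h

lemma exit_base {u v c0 : Word α β o₁ o₂} (h : GoodStep u v)
    (hu : c0.val <+: u.val) (hv : ¬ c0.val <+: v.val) : u = c0 := by
  obtain ⟨w, d, d', hud, hvd, hd, hd', -⟩ := h
  have hcw : ¬ c0.val <+: w := fun hc => hv (hvd ▸ hc.trans (List.prefix_append w d'))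
  have hlen : w.length < c0.val.length := by
    by_contra hle
    push_neg at hle
    exact hcw (List.prefix_of_prefix_length_le (hud ▸ hu) (hud ▸ List.prefix_append w d) hle)
  have h1 : c0.val.length ≤ u.val.length := hu.length_le
  have h2 : u.val.length ≤ c0.val.length := by
    rw [hud, List.length_append]; omega
  exact Subtype.ext (hu.eq_of_length (le_antisymm h1 h2)).symm

end AuxLemmas
section AuxMeasure

set_option linter.unusedSectionVars false

variable {α β : Type} {o₁ : α} {o₂ : β} [DecidableEq α] [DecidableEq β]

lemma countable_word (S : Setup α β o₁ o₂) : Countable (Word α β o₁ o₂) := by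
  haveI := S.countable₁
  haveI := S.countable₂
  infer_instance

lemma measurableSet_coord {n : ℕ} {T : Set (Word α β o₁ o₂)} :
    MeasurableSet {ω : ℕ → Word α β o₁ o₂ | ω n ∈ T} := by
  have h : {ω : ℕ → Word α β o₁ o₂ | ω n ∈ T} =
      (fun ω : ℕ → Word α β o₁ o₂ => ω n) ⁻¹' T := rfl
  rw [h]
  exact (measurable_pi_apply n) MeasurableSpace.measurableSet_top

lemma measurableSet_coords {P : ℕ → Word α β o₁ o₂ → Prop} :
    MeasurableSet {ω : ℕ → Word α β o₁ o₂ | ∀ m, P m (ω m)} := by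
  have h : {ω : ℕ → Word α β o₁ o₂ | ∀ m, P m (ω m)} =
      ⋂ m, (fun ω : ℕ → Word α β o₁ o₂ => ω m) ⁻¹' {w | P m w} := by
    ext ω; simp
  rw [h]
  exact MeasurableSet.iInter fun m =>
    (measurable_pi_apply m) MeasurableSpace.measurableSet_top

lemma measure_start_compl (S : Setup α β o₁ o₂) (y : Word α β o₁ o₂) :
    S.μ y {ω | ω 0 = y}ᶜ = 0 := by
  haveI := S.μ_prob y
  have hm : MeasurableSet {ω : ℕ → Word α β o₁ o₂ | ω 0 = y} :=
    measurableSet_coord (T := {y})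
  rw [measure_compl hm (measure_ne_top _ _), S.μ_start y, measure_univ, tsub_self]

/-- The transition weight of the chain. -/
def stepP (S : Setup α β o₁ o₂) (u v : Word α β o₁ o₂) : ℝ :=
  S.a * pbar1 o₁ o₂ S.p₁ u v + (1 - S.a) * pbar2 o₁ o₂ S.p₂ u v

lemma measure_pair_one (S : Setup α β o₁ o₂) (y v : Word α β o₁ o₂) :
    S.μ y {ω | ω 0 = y ∧ ω 1 = v} = ENNReal.ofReal (stepP S y v) := by
  have hcyl := S.μ_cyl y 1 (fun i => if i = 0 then y else v)
  have hset : {ω : ℕ → Word α β o₁ o₂ | ∀ i ≤ 1, ω i = if i = 0 then y else v} =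
      {ω | ω 0 = y ∧ ω 1 = v} := by
    ext ω
    constructor
    · intro h
      exact ⟨by simpa using h 0 (by norm_num), by simpa using h 1 le_rfl⟩
    · rintro ⟨h0, h1⟩ i hi
      interval_cases i <;> simp [h0, h1]
  rw [hset] at hcyl
  rw [hcyl]
  simp [stepP, Finset.prod_range_one]

lemma measure_one_mem (S : Setup α β o₁ o₂) (y : Word α β o₁ o₂) (T : Set (Word α β o₁ o₂)) :
    S.μ y {ω | ω 0 = y ∧ ω 1 ∈ T} = ∑' v : T, ENNReal.ofReal (stepP S y (v : Word α β o₁ o₂)) := by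
  haveI := countable_word S
  have hset : {ω : ℕ → Word α β o₁ o₂ | ω 0 = y ∧ ω 1 ∈ T} =
      ⋃ v : T, {ω | ω 0 = y ∧ ω 1 = (v : Word α β o₁ o₂)} := by
    ext ω
    simp only [Set.mem_setOf_eq, Set.mem_iUnion]
    constructor
    · rintro ⟨h0, h1⟩
      exact ⟨⟨ω 1, h1⟩, h0, rfl⟩
    · rintro ⟨v, h0, h1⟩
      exact ⟨h0, h1 ▸ v.2⟩
  rw [hset, measure_iUnion ?_ ?_]
  · exact tsum_congr fun v => measure_pair_one S y v
  · intro a b hab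
    refine Set.disjoint_left.mpr fun ω hωa hωb => hab ?_
    exact Subtype.ext (hωa.2.symm.trans hωb.2)
  · intro v
    exact (measurableSet_coord (n := 0) (T := {y})).inter
      (measurableSet_coord (n := 1) (T := {(v : Word α β o₁ o₂)}))

lemma measure_step_zero (S : Setup α β o₁ o₂) (y u v : Word α β o₁ o₂) (m : ℕ)
    (h : stepP S u v = 0) :
    S.μ y {ω | ω m = u ∧ ω (m + 1) = v} = 0 := by
  haveI := countable_word S
  classical
  set wfun : (Fin m → Word α β o₁ o₂) → ℕ → Word α β o₁ o₂ :=
    fun p i => if h : i < m then p ⟨i, h⟩ else if i = m then u else v with hwfun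
  have hsub : {ω : ℕ → Word α β o₁ o₂ | ω m = u ∧ ω (m + 1) = v} ⊆
      ⋃ p : Fin m → Word α β o₁ o₂, {ω | ∀ i ≤ m + 1, ω i = wfun p i} := by
    rintro ω ⟨h1, h2⟩
    refine Set.mem_iUnion.mpr ⟨fun i => ω i, fun i hi => ?_⟩
    simp only [hwfun]
    split
    · rfl
    · rename_i hlt
      split
      · rename_i he; rw [he]; exact h1
      · rename_i hne
        have : i = m + 1 := by omega
        rw [this]; exact h2
  refine le_antisymm (le_trans (measure_mono hsub) (le_trans (measure_iUnion_le _) ?_))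
    (zero_le)
  have hz : ∀ p : Fin m → Word α β o₁ o₂,
      S.μ y {ω | ∀ i ≤ m + 1, ω i = wfun p i} = 0 := by
    intro p
    rw [S.μ_cyl y (m + 1) (wfun p)]
    have hm1 : wfun p m = u := by
      simp only [hwfun]
      rw [dif_neg (by omega)]
      simp
    have hm2 : wfun p (m + 1) = v := by
      simp only [hwfun]
      rw [dif_neg (by omega)]
      simp
    have hprod : (∏ i ∈ Finset.range (m + 1),
        (S.a * pbar1 o₁ o₂ S.p₁ (wfun p i) (wfun p (i + 1)) +
          (1 - S.a) * pbar2 o₁ o₂ S.p₂ (wfun p i) (wfun p (i + 1)))) = 0 := by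
      refine Finset.prod_eq_zero (Finset.self_mem_range_succ m) ?_
      rw [hm1, hm2]
      exact h
    rw [hprod]
    simp
  refine le_of_eq ?_
  calc (∑' p : Fin m → Word α β o₁ o₂, S.μ y {ω | ∀ i ≤ m + 1, ω i = wfun p i})
      = ∑' _ : Fin m → Word α β o₁ o₂, (0 : ℝ≥0∞) := tsum_congr hz
    _ = 0 := by simp

/-- The set of "good" trajectories: correct start and only admissible steps. -/
def goodPaths (S : Setup α β o₁ o₂) (y : Word α β o₁ o₂) : Set (ℕ → Word α β o₁ o₂) :=
  {ω | ω 0 = y ∧ ∀ m, stepP S (ω m) (ω (m + 1)) ≠ 0}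

lemma measure_goodPaths_compl (S : Setup α β o₁ o₂) (y : Word α β o₁ o₂) :
    S.μ y (goodPaths S y)ᶜ = 0 := by
  haveI := countable_word S
  have hsub : (goodPaths S y)ᶜ ⊆
      {ω | ω 0 = y}ᶜ ∪ ⋃ (m : ℕ) (q : {q : Word α β o₁ o₂ × Word α β o₁ o₂ // stepP S q.1 q.2 = 0}),
        {ω | ω m = q.val.1 ∧ ω (m + 1) = q.val.2} := by
    intro ω hω
    simp only [goodPaths, Set.mem_compl_iff, Set.mem_setOf_eq, not_and, not_forall] at hω
    by_cases h0 : ω 0 = y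
    · obtain ⟨m, hm⟩ := hω h0
      push_neg at hm
      exact Or.inr (Set.mem_iUnion.mpr ⟨m, Set.mem_iUnion.mpr ⟨⟨(ω m, ω (m + 1)), hm⟩, rfl, rfl⟩⟩)
    · exact Or.inl h0
  have hU : S.μ y (⋃ (m : ℕ) (q : {q : Word α β o₁ o₂ × Word α β o₁ o₂ // stepP S q.1 q.2 = 0}),
      {ω | ω m = q.val.1 ∧ ω (m + 1) = q.val.2}) = 0 :=
    measure_iUnion_null fun m => measure_iUnion_null fun q =>
      measure_step_zero S y q.val.1 q.val.2 m q.2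
  refine le_antisymm ?_ (zero_le)
  calc S.μ y (goodPaths S y)ᶜ ≤ _ := measure_mono hsub
    _ ≤ _ + _ := measure_union_le _ _
    _ = 0 := by rw [measure_start_compl S y, hU, add_zero]

end AuxMeasure
section AuxEval

set_option linter.unusedSectionVars false

variable {α β : Type} {o₁ : α} {o₂ : β}
variable (g : {u : α // u ≠ o₁})

lemma wtype_eq_one {y : Word α β o₁ o₂} {w0 : List (Letter α β o₁ o₂)}
    (hy : y.val = w0 ++ [Sum.inl g]) : wtype y = 1 := by
  unfold wtype
  rw [hy, List.getLast?_concat]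
  rfl

lemma wtype_ne_one {w : Word α β o₁ o₂}
    (hlast : ∀ l ∈ w.val.getLast?, Letter.side l ≠ 1) : wtype w ≠ 1 := by
  unfold wtype
  cases h : w.val.getLast? with
  | none => simp
  | some l => simpa using hlast l h

section P1
variable [DecidableEq α]
lemma incl1_of_ne {t : α} (h : t ≠ o₁) :
    (incl1 o₁ o₂ t : List (Letter α β o₁ o₂)) = [Sum.inl ⟨t, h⟩] := by
  unfold incl1; rw [dif_neg h]

lemma incl1_g : (incl1 o₁ o₂ g.val : List (Letter α β o₁ o₂)) = [Sum.inl g] := by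
  rw [incl1_of_ne g.2]

lemma pbar1_apply (p₁ : α → α → ℝ) {y : Word α β o₁ o₂} {w0 : List (Letter α β o₁ o₂)}
    (hw0 : Alternating w0) (hy : y.val = w0 ++ [Sum.inl g])
    (hlast : ∀ l ∈ w0.getLast?, Letter.side l ≠ 1) (v : Word α β o₁ o₂) :
    pbar1 o₁ o₂ p₁ y v =
      ∑' t : α, Set.indicator {t : α | v.val = w0 ++ incl1 o₁ o₂ t} (fun t => p₁ g.val t) t := by
  have hW0last : ∀ l ∈ (⟨w0, hw0⟩ : Word α β o₁ o₂).val.getLast?, Letter.side l ≠ 1 := hlast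
  have hty : wtype (⟨w0, hw0⟩ : Word α β o₁ o₂) ≠ 1 := wtype_ne_one hW0last
  unfold pbar1
  rw [tsum_eq_single (⟨w0, hw0⟩ : Word α β o₁ o₂) ?_]
  · rw [tsum_eq_single g.val ?_]
    · refine tsum_congr fun t => ?_
      by_cases hC : v.val = w0 ++ incl1 o₁ o₂ t
      · rw [if_pos ⟨hty, by rw [incl1_g, hy], hC⟩]
        exact (Set.indicator_of_mem
          (show t ∈ {t : α | v.val = w0 ++ incl1 o₁ o₂ t} from hC) _).symm
      · rw [if_neg (fun h => hC h.2.2)]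
        exact (Set.indicator_of_notMem
          (show t ∉ {t : α | v.val = w0 ++ incl1 o₁ o₂ t} from hC) _).symm
    · intro a ha
      refine tsum_congr (fun t => ?_) |>.trans tsum_zero
      rw [if_neg]
      rintro ⟨-, h2, -⟩
      rw [hy] at h2
      by_cases hao : a = o₁
      · subst hao
        unfold incl1 at h2
        rw [dif_pos rfl, List.append_nil] at h2
        have := congrArg List.length h2
        simp at this
      · rw [incl1_of_ne hao] at h2
        obtain ⟨-, h4⟩ := List.append_inj' h2 rfl
        have : (⟨a, hao⟩ : {a : α // a ≠ o₁}) = g := by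
          simpa using h4.symm
        exact ha (by rw [← this])
  · intro w hw
    refine tsum_congr (fun a => tsum_congr (fun b => ?_) |>.trans tsum_zero) |>.trans tsum_zero
    rw [if_neg]
    rintro ⟨h1, h2, -⟩
    by_cases hao : a = o₁
    · subst hao
      unfold incl1 at h2
      rw [dif_pos rfl, List.append_nil] at h2
      have : w = y := Subtype.ext h2.symm
      subst this
      exact h1 (wtype_eq_one g hy)
    · rw [incl1_of_ne hao, hy] at h2
      obtain ⟨h3, -⟩ := List.append_inj' h2 rfl
      exact hw (Subtype.ext h3.symm)

end P1
section P2
variable [DecidableEq β]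
lemma pbar2_apply (p₂ : β → β → ℝ) {y : Word α β o₁ o₂} {w0 : List (Letter α β o₁ o₂)}
    (hy : y.val = w0 ++ [Sum.inl g]) (v : Word α β o₁ o₂) :
    pbar2 o₁ o₂ p₂ y v =
      ∑' t : β, Set.indicator {t : β | v.val = y.val ++ incl2 o₁ o₂ t} (fun t => p₂ o₂ t) t := by
  have hty : wtype y ≠ 2 := by rw [wtype_eq_one g hy]; omega
  unfold pbar2
  rw [tsum_eq_single y ?_]
  · rw [tsum_eq_single o₂ ?_]
    · refine tsum_congr fun t => ?_
      by_cases hC : v.val = y.val ++ incl2 o₁ o₂ t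
      · rw [if_pos ⟨hty, by unfold incl2; rw [dif_pos rfl, List.append_nil], hC⟩]
        exact (Set.indicator_of_mem
          (show t ∈ {t : β | v.val = y.val ++ incl2 o₁ o₂ t} from hC) _).symm
      · rw [if_neg (fun h => hC h.2.2)]
        exact (Set.indicator_of_notMem
          (show t ∉ {t : β | v.val = y.val ++ incl2 o₁ o₂ t} from hC) _).symm
    · intro b hb
      refine tsum_congr (fun t => ?_) |>.trans tsum_zero
      rw [if_neg]
      rintro ⟨-, h2, -⟩
      by_cases hbo : b = o₂
      · exact hb hbo
      · unfold incl2 at h2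
        rw [dif_neg hbo] at h2
        have := congrArg List.length h2
        simp at this
  · intro w hw
    refine tsum_congr (fun a => tsum_congr (fun b => ?_) |>.trans tsum_zero) |>.trans tsum_zero
    rw [if_neg]
    rintro ⟨-, h2, -⟩
    by_cases hbo : a = o₂
    · subst hbo
      unfold incl2 at h2
      rw [dif_pos rfl, List.append_nil] at h2
      exact hw (Subtype.ext h2.symm)
    · unfold incl2 at h2
      rw [dif_neg hbo, hy] at h2
      obtain ⟨-, h4⟩ := List.append_inj' h2 rfl
      simp at h4

end P2
end AuxEval
section AuxFormula

set_option linter.unusedSectionVars false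

variable {α β : Type} {o₁ : α} {o₂ : β} [DecidableEq α] [DecidableEq β]

lemma sum_step_formula (S : Setup α β o₁ o₂) (g : {u : α // u ≠ o₁})
    (y : Word α β o₁ o₂) (w0 : List (Letter α β o₁ o₂)) (hw0 : Alternating w0)
    (hy : y.val = w0 ++ [Sum.inl g]) (hlast : ∀ l ∈ w0.getLast?, Letter.side l ≠ 1)
    (ψ₁ : α → Word α β o₁ o₂) (hψ₁ : ∀ t, (ψ₁ t).val = w0 ++ incl1 o₁ o₂ t)
    (ψ₂ : β → Word α β o₁ o₂) (hψ₂ : ∀ t, (ψ₂ t).val = y.val ++ incl2 o₁ o₂ t)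
    (T : Set (Word α β o₁ o₂)) :
    ∑' v : T, ENNReal.ofReal (stepP S y (v : Word α β o₁ o₂))
      = ENNReal.ofReal S.a *
          (∑' t : α, Set.indicator {t : α | ψ₁ t ∈ T}
            (fun t => ENNReal.ofReal (S.p₁ g.val t)) t)
        + ENNReal.ofReal (1 - S.a) *
          (∑' t : β, Set.indicator {t : β | ψ₂ t ∈ T}
            (fun t => ENNReal.ofReal (S.p₂ o₂ t)) t) := by
  have ha0 : (0 : ℝ) ≤ S.a := le_of_lt S.a_mem.1
  have h1a : (0 : ℝ) ≤ 1 - S.a := by have := S.a_mem.2; linarith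
  have hof1 : ∀ v : Word α β o₁ o₂, ENNReal.ofReal (pbar1 o₁ o₂ S.p₁ y v)
      = ∑' t : α, Set.indicator {t : α | v = ψ₁ t}
          (fun t => ENNReal.ofReal (S.p₁ g.val t)) t := by
    intro v
    rw [pbar1_apply g S.p₁ hw0 hy hlast v]
    by_cases hex : ∃ t, v.val = w0 ++ incl1 o₁ o₂ t
    · obtain ⟨t0, ht0⟩ := hex
      have huniq : ∀ t, t ≠ t0 → ¬ (v.val = w0 ++ incl1 o₁ o₂ t) := by
        intro t ht hc
        exact ht (incl1_injective (List.append_cancel_left (hc.symm.trans ht0)))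
      have hmem : v = ψ₁ t0 := Subtype.ext (ht0.trans (hψ₁ t0).symm)
      rw [tsum_eq_single t0 (fun t ht => Set.indicator_of_notMem
          (show t ∉ {t : α | v.val = w0 ++ incl1 o₁ o₂ t} from huniq t ht) _),
        Set.indicator_of_mem
          (show t0 ∈ {t : α | v.val = w0 ++ incl1 o₁ o₂ t} from ht0),
        tsum_eq_single t0 (fun t ht => Set.indicator_of_notMem
          (show t ∉ {t : α | v = ψ₁ t} from
            fun he => huniq t ht (by rw [show v = ψ₁ t from he, hψ₁ t])) _),
        Set.indicator_of_mem (show t0 ∈ {t : α | v = ψ₁ t} from hmem)]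
    · push_neg at hex
      rw [(tsum_congr fun t => Set.indicator_of_notMem
          (show t ∉ {t : α | v.val = w0 ++ incl1 o₁ o₂ t} from hex t) _).trans tsum_zero,
        (tsum_congr fun t => Set.indicator_of_notMem
          (show t ∉ {t : α | v = ψ₁ t} from
            fun he => hex t (by rw [show v = ψ₁ t from he, hψ₁ t])) _).trans tsum_zero,
        ENNReal.ofReal_zero]
  have hof2 : ∀ v : Word α β o₁ o₂, ENNReal.ofReal (pbar2 o₁ o₂ S.p₂ y v)
      = ∑' t : β, Set.indicator {t : β | v = ψ₂ t}
          (fun t => ENNReal.ofReal (S.p₂ o₂ t)) t := by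
    intro v
    rw [pbar2_apply g S.p₂ hy v]
    by_cases hex : ∃ t, v.val = y.val ++ incl2 o₁ o₂ t
    · obtain ⟨t0, ht0⟩ := hex
      have huniq : ∀ t, t ≠ t0 → ¬ (v.val = y.val ++ incl2 o₁ o₂ t) := by
        intro t ht hc
        exact ht (incl2_injective (List.append_cancel_left (hc.symm.trans ht0)))
      have hmem : v = ψ₂ t0 := Subtype.ext (ht0.trans (hψ₂ t0).symm)
      rw [tsum_eq_single t0 (fun t ht => Set.indicator_of_notMem
          (show t ∉ {t : β | v.val = y.val ++ incl2 o₁ o₂ t} from huniq t ht) _),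
        Set.indicator_of_mem
          (show t0 ∈ {t : β | v.val = y.val ++ incl2 o₁ o₂ t} from ht0),
        tsum_eq_single t0 (fun t ht => Set.indicator_of_notMem
          (show t ∉ {t : β | v = ψ₂ t} from
            fun he => huniq t ht (by rw [show v = ψ₂ t from he, hψ₂ t])) _),
        Set.indicator_of_mem (show t0 ∈ {t : β | v = ψ₂ t} from hmem)]
    · push_neg at hex
      rw [(tsum_congr fun t => Set.indicator_of_notMem
          (show t ∉ {t : β | v.val = y.val ++ incl2 o₁ o₂ t} from hex t) _).trans tsum_zero,
        (tsum_congr fun t => Set.indicator_of_notMem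
          (show t ∉ {t : β | v = ψ₂ t} from
            fun he => hex t (by rw [show v = ψ₂ t from he, hψ₂ t])) _).trans tsum_zero,
        ENNReal.ofReal_zero]
  have hpoint : ∀ v : Word α β o₁ o₂, ENNReal.ofReal (stepP S y v)
      = ENNReal.ofReal S.a * ENNReal.ofReal (pbar1 o₁ o₂ S.p₁ y v)
        + ENNReal.ofReal (1 - S.a) * ENNReal.ofReal (pbar2 o₁ o₂ S.p₂ y v) := by
    intro v
    unfold stepP
    rw [ENNReal.ofReal_add (mul_nonneg ha0 (pbar1_nonneg S.p₁_nonneg y v))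
      (mul_nonneg h1a (pbar2_nonneg S.p₂_nonneg y v)),
      ENNReal.ofReal_mul ha0, ENNReal.ofReal_mul h1a]
  have hinner1 : ∀ t : α, (∑' v : T, Set.indicator {t' : α | (v : Word α β o₁ o₂) = ψ₁ t'}
        (fun t' => ENNReal.ofReal (S.p₁ g.val t')) t)
      = Set.indicator {t' : α | ψ₁ t' ∈ T} (fun t' => ENNReal.ofReal (S.p₁ g.val t')) t := by
    intro t
    by_cases hm : ψ₁ t ∈ T
    · rw [tsum_eq_single (⟨ψ₁ t, hm⟩ : T)
        (fun v hv => Set.indicator_of_notMem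
          (show t ∉ {t' : α | (v : Word α β o₁ o₂) = ψ₁ t'} from
            fun he => hv (Subtype.ext he)) _),
        Set.indicator_of_mem
          (show t ∈ {t' : α | ((⟨ψ₁ t, hm⟩ : T) : Word α β o₁ o₂) = ψ₁ t'} from rfl),
        Set.indicator_of_mem (show t ∈ {t' : α | ψ₁ t' ∈ T} from hm)]
    · rw [Set.indicator_of_notMem (show t ∉ {t' : α | ψ₁ t' ∈ T} from hm)]
      exact (tsum_congr fun (v : T) => Set.indicator_of_notMem
        (show t ∉ {t' : α | (v : Word α β o₁ o₂) = ψ₁ t'} from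
          fun he => hm (Set.mem_of_eq_of_mem he.symm v.2)) _).trans tsum_zero
  have hinner2 : ∀ t : β, (∑' v : T, Set.indicator {t' : β | (v : Word α β o₁ o₂) = ψ₂ t'}
        (fun t' => ENNReal.ofReal (S.p₂ o₂ t')) t)
      = Set.indicator {t' : β | ψ₂ t' ∈ T} (fun t' => ENNReal.ofReal (S.p₂ o₂ t')) t := by
    intro t
    by_cases hm : ψ₂ t ∈ T
    · rw [tsum_eq_single (⟨ψ₂ t, hm⟩ : T)
        (fun v hv => Set.indicator_of_notMem
          (show t ∉ {t' : β | (v : Word α β o₁ o₂) = ψ₂ t'} from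
            fun he => hv (Subtype.ext he)) _),
        Set.indicator_of_mem
          (show t ∈ {t' : β | ((⟨ψ₂ t, hm⟩ : T) : Word α β o₁ o₂) = ψ₂ t'} from rfl),
        Set.indicator_of_mem (show t ∈ {t' : β | ψ₂ t' ∈ T} from hm)]
    · rw [Set.indicator_of_notMem (show t ∉ {t' : β | ψ₂ t' ∈ T} from hm)]
      exact (tsum_congr fun (v : T) => Set.indicator_of_notMem
        (show t ∉ {t' : β | (v : Word α β o₁ o₂) = ψ₂ t'} from
          fun he => hm (Set.mem_of_eq_of_mem he.symm v.2)) _).trans tsum_zero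
  calc ∑' v : T, ENNReal.ofReal (stepP S y (v : Word α β o₁ o₂))
      = ∑' v : T,
          (ENNReal.ofReal S.a * (∑' t : α, Set.indicator
              {t : α | (v : Word α β o₁ o₂) = ψ₁ t}
              (fun t => ENNReal.ofReal (S.p₁ g.val t)) t)
            + ENNReal.ofReal (1 - S.a) * (∑' t : β, Set.indicator
              {t : β | (v : Word α β o₁ o₂) = ψ₂ t}
              (fun t => ENNReal.ofReal (S.p₂ o₂ t)) t)) := by
        refine tsum_congr fun v => ?_
        rw [hpoint (v : Word α β o₁ o₂), hof1, hof2]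
    _ = ENNReal.ofReal S.a * (∑' v : T, ∑' t : α, Set.indicator
              {t : α | (v : Word α β o₁ o₂) = ψ₁ t}
              (fun t => ENNReal.ofReal (S.p₁ g.val t)) t)
        + ENNReal.ofReal (1 - S.a) * (∑' v : T, ∑' t : β, Set.indicator
              {t : β | (v : Word α β o₁ o₂) = ψ₂ t}
              (fun t => ENNReal.ofReal (S.p₂ o₂ t)) t) := by
        rw [ENNReal.tsum_add, ENNReal.tsum_mul_left, ENNReal.tsum_mul_left]
    _ = ENNReal.ofReal S.a * (∑' t : α, ∑' v : T, Set.indicator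
              {t' : α | (v : Word α β o₁ o₂) = ψ₁ t'}
              (fun t' => ENNReal.ofReal (S.p₁ g.val t')) t)
        + ENNReal.ofReal (1 - S.a) * (∑' t : β, ∑' v : T, Set.indicator
              {t' : β | (v : Word α β o₁ o₂) = ψ₂ t'}
              (fun t' => ENNReal.ofReal (S.p₂ o₂ t')) t) := by
        rw [ENNReal.tsum_comm (f := fun (v : T) (t : α) => Set.indicator
              {t' : α | (v : Word α β o₁ o₂) = ψ₁ t'}
              (fun t' => ENNReal.ofReal (S.p₁ g.val t')) t),
          ENNReal.tsum_comm (f := fun (v : T) (t : β) => Set.indicator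
              {t' : β | (v : Word α β o₁ o₂) = ψ₂ t'}
              (fun t' => ENNReal.ofReal (S.p₂ o₂ t')) t)]
    _ = _ := by
        rw [tsum_congr hinner1, tsum_congr hinner2]

end AuxFormula
section AuxPartition

set_option linter.unusedSectionVars false

variable {α β : Type} {o₁ : α} {o₂ : β} [DecidableEq α] [DecidableEq β]

lemma partition1 (S : Setup α β o₁ o₂) (y : Word α β o₁ o₂) (G : Set (Word α β o₁ o₂))
    (hyG : y ∈ G) :
    S.μ y {ω | ω 0 = y ∧ ω 1 ∈ cone y} =
      (∑' n : ℕ, S.μ y {ω | ω (n+1) ∈ G ∧ (∀ m, 1 ≤ m → m < n+1 → ω m ∉ G) ∧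
          ∀ m ≤ n+1, ω m ∈ cone y})
      + S.μ y (neverHit G ∩ {ω | ∀ n, 1 ≤ n → ω n ∈ cone y}) := by
  classical
  set A : ℕ → Set (ℕ → Word α β o₁ o₂) := fun n =>
    {ω | ω n ∈ G ∧ (∀ m, 1 ≤ m → m < n → ω m ∉ G) ∧ ∀ m ≤ n, ω m ∈ cone y} with hA
  set Ainf : Set (ℕ → Word α β o₁ o₂) :=
    neverHit G ∩ {ω | ∀ n, 1 ≤ n → ω n ∈ cone y} with hAinf
  have hmeasA : ∀ n, MeasurableSet (A n) := by
    intro n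
    have he : A n = {ω : ℕ → Word α β o₁ o₂ | ∀ m, (m = n → ω m ∈ G) ∧
        (1 ≤ m → m < n → ω m ∉ G) ∧ (m ≤ n → ω m ∈ cone y)} := by
      ext ω
      simp only [hA, Set.mem_setOf_eq]
      constructor
      · rintro ⟨h1, h2, h3⟩ m
        exact ⟨fun hm => hm ▸ h1, fun ha hb => h2 m ha hb, fun hm => h3 m hm⟩
      · intro h
        exact ⟨(h n).1 rfl, fun m ha hb => (h m).2.1 ha hb, fun m hm => (h m).2.2 hm⟩
    rw [he]
    exact measurableSet_coords (P := fun m w => (m = n → w ∈ G) ∧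
      (1 ≤ m → m < n → w ∉ G) ∧ (m ≤ n → w ∈ cone y))
  have hmeasAinf : MeasurableSet Ainf := by
    have he : Ainf = {ω : ℕ → Word α β o₁ o₂ |
        ∀ m, (1 ≤ m → ω m ∉ G) ∧ (1 ≤ m → ω m ∈ cone y)} := by
      ext ω
      simp only [hAinf, neverHit, Set.mem_inter_iff, Set.mem_setOf_eq]
      constructor
      · rintro ⟨h1, h2⟩ m
        exact ⟨h1 m, h2 m⟩
      · intro h
        exact ⟨fun m hm => (h m).1 hm, fun m hm => (h m).2 hm⟩
    rw [he]
    exact measurableSet_coords (P := fun m w => (1 ≤ m → w ∉ G) ∧ (1 ≤ m → w ∈ cone y))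
  have hdisjA : Pairwise (Function.onFun Disjoint fun n => A (n+1)) := by
    intro i j hij
    rcases Nat.lt_or_ge i j with h | h
    · exact Set.disjoint_left.mpr fun ω hωi hωj => (hωj.2.1 (i+1) (by omega) (by omega)) hωi.1
    · have h' : j < i := by omega
      exact Set.disjoint_left.mpr fun ω hωi hωj => (hωi.2.1 (j+1) (by omega) (by omega)) hωj.1
  have hdisj2 : Disjoint (⋃ n, A (n+1)) Ainf := by
    rw [Set.disjoint_left]
    rintro ω hω hωinf
    obtain ⟨n, hn⟩ := Set.mem_iUnion.mp hω
    exact hωinf.1 (n+1) (by omega) hn.1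
  have hgood := measure_goodPaths_compl S y
  have hSE : {ω : ℕ → Word α β o₁ o₂ | ω 0 = y ∧ ω 1 ∈ cone y} ∩ goodPaths S y =
      ((⋃ n, A (n+1)) ∪ Ainf) ∩ goodPaths S y := by
    ext ω
    simp only [Set.mem_inter_iff, Set.mem_setOf_eq, Set.mem_union, Set.mem_iUnion]
    constructor
    · rintro ⟨⟨h0, h1⟩, hg⟩
      refine ⟨?_, hg⟩
      have claim : ∀ m, (∀ k, 1 ≤ k → k < m → ω k ∉ G) → ω m ∈ cone y := by
        intro m
        induction m with
        | zero =>
          intro _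
          show y.val <+: (ω 0).val
          rw [h0]
        | succ k ih =>
          intro hk
          rcases Nat.eq_zero_or_pos k with rfl | hkpos
          · exact h1
          · by_contra hc
            have hgs : GoodStep (ω k) (ω (k+1)) := step_goodStep S (hg.2 k)
            have hky : ω k = y :=
              exit_base hgs (ih fun j hj1 hj2 => hk j hj1 (by omega)) hc
            exact hk k hkpos (by omega) (hky ▸ hyG)
      by_cases hhit : ∃ n, 1 ≤ n ∧ ω n ∈ G
      · have hspec := Nat.find_spec hhit
        have hmin : ∀ m, m < Nat.find hhit → ¬(1 ≤ m ∧ ω m ∈ G) :=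
          fun m hm => Nat.find_min hhit hm
        obtain ⟨k, hk⟩ := Nat.exists_eq_succ_of_ne_zero
          (show Nat.find hhit ≠ 0 by intro h0'; have := hspec.1; omega)
        have hk' : k + 1 = Nat.find hhit := hk.symm
        refine Or.inl ⟨k, ?_, ?_, ?_⟩
        · rw [hk']; exact hspec.2
        · intro m hm1 hm2
          rw [hk'] at hm2
          exact fun hmG => hmin m hm2 ⟨hm1, hmG⟩
        · intro m hm
          rw [hk'] at hm
          exact claim m fun j hj1 hj2 => fun hjG => hmin j (by omega) ⟨hj1, hjG⟩
      · push_neg at hhit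
        exact Or.inr ⟨fun m hm => hhit m hm,
          fun nn hnn => claim nn fun j hj1 hj2 => hhit j hj1⟩
    · rintro ⟨hmem, hg⟩
      refine ⟨⟨hg.1, ?_⟩, hg⟩
      rcases hmem with ⟨n, hn⟩ | hinf
      · exact hn.2.2 1 (by omega)
      · exact hinf.2 1 le_rfl
  calc S.μ y {ω | ω 0 = y ∧ ω 1 ∈ cone y}
      = S.μ y ({ω | ω 0 = y ∧ ω 1 ∈ cone y} ∩ goodPaths S y) :=
        (measure_inter_conull hgood).symm
    _ = S.μ y (((⋃ n, A (n+1)) ∪ Ainf) ∩ goodPaths S y) := by rw [hSE]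
    _ = S.μ y ((⋃ n, A (n+1)) ∪ Ainf) := measure_inter_conull hgood
    _ = S.μ y (⋃ n, A (n+1)) + S.μ y Ainf := measure_union hdisj2 hmeasAinf
    _ = _ := by rw [measure_iUnion hdisjA (fun n => hmeasA (n+1))]

lemma partition2 (S : Setup α β o₁ o₂) (y : Word α β o₁ o₂) (G : Set (Word α β o₁ o₂))
    (hyG : y ∈ G) (hGc : ∀ u ∈ G, u ∈ cone y → u = y) :
    S.μ y {ω | ω 0 = y ∧ ω 1 ∉ cone y} =
      (∑' n : ℕ, S.μ y {ω | ω (n+1) ∈ G ∧ (∀ m, 1 ≤ m → m < n+1 → ω m ∉ G) ∧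
          ∀ m, 1 ≤ m → m < n+1 → ω m ∉ cone y})
      + S.μ y (neverHit G ∩ {ω | ∀ n, 1 ≤ n → ω n ∉ cone y}) := by
  classical
  set A : ℕ → Set (ℕ → Word α β o₁ o₂) := fun n =>
    {ω | ω n ∈ G ∧ (∀ m, 1 ≤ m → m < n → ω m ∉ G) ∧ ∀ m, 1 ≤ m → m < n → ω m ∉ cone y}
    with hA
  set Ainf : Set (ℕ → Word α β o₁ o₂) :=
    neverHit G ∩ {ω | ∀ n, 1 ≤ n → ω n ∉ cone y} with hAinf
  have hmeasA : ∀ n, MeasurableSet (A n) := by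
    intro n
    have he : A n = {ω : ℕ → Word α β o₁ o₂ | ∀ m, (m = n → ω m ∈ G) ∧
        (1 ≤ m → m < n → ω m ∉ G) ∧ (1 ≤ m → m < n → ω m ∉ cone y)} := by
      ext ω
      simp only [hA, Set.mem_setOf_eq]
      constructor
      · rintro ⟨h1, h2, h3⟩ m
        exact ⟨fun hm => hm ▸ h1, fun ha hb => h2 m ha hb, fun ha hb => h3 m ha hb⟩
      · intro h
        exact ⟨(h n).1 rfl, fun m ha hb => (h m).2.1 ha hb, fun m ha hb => (h m).2.2 ha hb⟩
    rw [he]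
    exact measurableSet_coords (P := fun m w => (m = n → w ∈ G) ∧
      (1 ≤ m → m < n → w ∉ G) ∧ (1 ≤ m → m < n → w ∉ cone y))
  have hmeasAinf : MeasurableSet Ainf := by
    have he : Ainf = {ω : ℕ → Word α β o₁ o₂ |
        ∀ m, (1 ≤ m → ω m ∉ G) ∧ (1 ≤ m → ω m ∉ cone y)} := by
      ext ω
      simp only [hAinf, neverHit, Set.mem_inter_iff, Set.mem_setOf_eq]
      constructor
      · rintro ⟨h1, h2⟩ m
        exact ⟨h1 m, h2 m⟩
      · intro h
        exact ⟨fun m hm => (h m).1 hm, fun m hm => (h m).2 hm⟩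
    rw [he]
    exact measurableSet_coords (P := fun m w => (1 ≤ m → w ∉ G) ∧ (1 ≤ m → w ∉ cone y))
  have hdisjA : Pairwise (Function.onFun Disjoint fun n => A (n+1)) := by
    intro i j hij
    rcases Nat.lt_or_ge i j with h | h
    · exact Set.disjoint_left.mpr fun ω hωi hωj => (hωj.2.1 (i+1) (by omega) (by omega)) hωi.1
    · have h' : j < i := by omega
      exact Set.disjoint_left.mpr fun ω hωi hωj => (hωi.2.1 (j+1) (by omega) (by omega)) hωj.1
  have hdisj2 : Disjoint (⋃ n, A (n+1)) Ainf := by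
    rw [Set.disjoint_left]
    rintro ω hω hωinf
    obtain ⟨n, hn⟩ := Set.mem_iUnion.mp hω
    exact hωinf.1 (n+1) (by omega) hn.1
  have hgood := measure_goodPaths_compl S y
  have hSE : {ω : ℕ → Word α β o₁ o₂ | ω 0 = y ∧ ω 1 ∉ cone y} ∩ goodPaths S y =
      ((⋃ n, A (n+1)) ∪ Ainf) ∩ goodPaths S y := by
    ext ω
    simp only [Set.mem_inter_iff, Set.mem_setOf_eq, Set.mem_union, Set.mem_iUnion]
    constructor
    · rintro ⟨⟨h0, h1⟩, hg⟩
      refine ⟨?_, hg⟩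
      have claim : ∀ m, 1 ≤ m → (∀ k, 1 ≤ k → k ≤ m → ω k ∉ G) → ω m ∉ cone y := by
        intro m
        induction m with
        | zero => omega
        | succ k ih =>
          intro _ hk
          rcases Nat.eq_zero_or_pos k with rfl | hkpos
          · exact h1
          · intro hc
            have hgs : GoodStep (ω (k+1)) (ω k) := (step_goodStep S (hg.2 k)).symm
            have hprev : ω k ∉ cone y :=
              ih hkpos (fun j hj1 hj2 => hk j hj1 (by omega))
            have hky : ω (k+1) = y := exit_base hgs hc hprev
            exact hk (k+1) (by omega) le_rfl (hky ▸ hyG)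
      by_cases hhit : ∃ n, 1 ≤ n ∧ ω n ∈ G
      · have hspec := Nat.find_spec hhit
        have hmin : ∀ m, m < Nat.find hhit → ¬(1 ≤ m ∧ ω m ∈ G) :=
          fun m hm => Nat.find_min hhit hm
        obtain ⟨k, hk⟩ := Nat.exists_eq_succ_of_ne_zero
          (show Nat.find hhit ≠ 0 by intro h0'; have := hspec.1; omega)
        have hk' : k + 1 = Nat.find hhit := hk.symm
        refine Or.inl ⟨k, ?_, ?_, ?_⟩
        · rw [hk']; exact hspec.2
        · intro m hm1 hm2
          rw [hk'] at hm2
          exact fun hmG => hmin m hm2 ⟨hm1, hmG⟩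
        · intro m hm1 hm2
          rw [hk'] at hm2
          exact claim m hm1 fun j hj1 hj2 => fun hjG => hmin j (by omega) ⟨hj1, hjG⟩
      · push_neg at hhit
        exact Or.inr ⟨fun m hm => hhit m hm,
          fun nn hnn => claim nn hnn fun j hj1 hj2 => hhit j hj1⟩
    · rintro ⟨hmem, hg⟩
      refine ⟨⟨hg.1, ?_⟩, hg⟩
      rcases hmem with ⟨n, hn⟩ | hinf
      · rcases Nat.eq_zero_or_pos n with rfl | hnpos
        · intro hc
          have h1y : ω 1 = y := hGc (ω 1) hn.1 hc
          have h10 : ω 1 = ω 0 := by rw [h1y, hg.1]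
          have hgs : GoodStep (ω 0) (ω 1) := step_goodStep S (hg.2 0)
          rw [h10] at hgs
          exact not_goodStep_self (ω 0) hgs
        · exact hn.2.2 1 (by omega) (by omega)
      · exact hinf.2 1 le_rfl
  calc S.μ y {ω | ω 0 = y ∧ ω 1 ∉ cone y}
      = S.μ y ({ω | ω 0 = y ∧ ω 1 ∉ cone y} ∩ goodPaths S y) :=
        (measure_inter_conull hgood).symm
    _ = S.μ y (((⋃ n, A (n+1)) ∪ Ainf) ∩ goodPaths S y) := by rw [hSE]
    _ = S.μ y ((⋃ n, A (n+1)) ∪ Ainf) := measure_inter_conull hgood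
    _ = S.μ y (⋃ n, A (n+1)) + S.μ y Ainf := measure_union hdisj2 hmeasAinf
    _ = _ := by rw [measure_iUnion hdisjA (fun n => hmeasA (n+1))]

end AuxPartition
section AuxAlt

set_option linter.unusedSectionVars false

variable {α β : Type} {o₁ : α} {o₂ : β}

lemma alt_append_incl1 [DecidableEq α] {w0 : List (Letter α β o₁ o₂)} (hw0 : Alternating w0)
    (hlast : ∀ l ∈ w0.getLast?, Letter.side l ≠ 1) (t : α) :
    Alternating (w0 ++ incl1 o₁ o₂ t) := by
  show List.Chain' _ _
  unfold incl1
  split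
  · simpa [Alternating] using hw0
  · refine List.isChain_append.mpr ⟨hw0, List.isChain_singleton _, ?_⟩
    intro a ha b hb
    simp only [List.head?_cons, Option.mem_def, Option.some.injEq] at hb
    subst hb
    exact hlast a ha

lemma alt_append_incl2 [DecidableEq β] {y : List (Letter α β o₁ o₂)} (hy : Alternating y)
    {g : {u : α // u ≠ o₁}} (hylast : y.getLast? = some (Sum.inl g)) (t : β) :
    Alternating (y ++ incl2 o₁ o₂ t) := by
  show List.Chain' _ _
  unfold incl2
  split
  · simpa [Alternating] using hy
  · refine List.isChain_append.mpr ⟨hy, List.isChain_singleton _, ?_⟩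
    intro a ha b hb
    simp only [List.head?_cons, Option.mem_def, Option.some.injEq] at hb
    subst hb
    rw [hylast] at ha
    simp only [Option.mem_def, Option.some.injEq] at ha
    subst ha
    simp [Letter.side]

lemma prefix_incl1_iff [DecidableEq α] (g : {u : α // u ≠ o₁}) (t : α) :
    ([Sum.inl g] : List (Letter α β o₁ o₂)) <+: incl1 o₁ o₂ t ↔ t = g.val := by
  unfold incl1
  split
  · rename_i h
    constructor
    · intro hp
      exfalso
      have := hp.length_le
      simp at this
    · intro ht
      exact absurd (ht ▸ h) g.2
  · rename_i h
    constructor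
    · intro hp
      have heq := hp.eq_of_length (by simp)
      simp only [List.cons.injEq, and_true] at heq
      have := Sum.inl.inj heq
      exact (congrArg Subtype.val this).symm
    · intro ht
      have hgt : (⟨t, h⟩ : {a : α // a ≠ o₁}) = g := Subtype.ext ht
      rw [hgt]

end AuxAlt

/-- **Lemma 5.9.** For every finite `R ∈ 𝒲` and `x ∈ V_{2,g}` with
`ℙ[R̃_norm = R, ι = x] > 0`:
(i)  `Ū₀(g, gR|1) = ℙ_g[S_{gR} = ∞, X_n ∈ C(g) ∀ n ≥ 1]`;
(ii) `Ū₁(gx, gR|1) = ℙ_{gx}[S_{gR} = ∞, X_n ∉ C(gx) ∀ n ≥ 1]`. -/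
theorem Ubar_eq_escape_prob (S : Setup α β o₁ o₂) (hρ : S.rho < 1)
    (g : {u : α // u ≠ o₁})
    (R : Set (Word α β o₁ o₂)) (hR : R.Finite)
    (x : Word α β o₁ o₂) (hx : x ∈ V2g g)
    (hpos : 0 < S.μ emptyWord
      {ω | Rnorm g ω = R ∧ (ω (Tk g ω 1)).val = (ω (Tk g ω 0)).val ++ x.val}) :
    ((1 - S.a) * 1 - U0real S g (gSet g R) 1 =
      (S.μ (letterWord (Sum.inl g))
        (neverHit (gSet g R) ∩
          {ω | ∀ n, 1 ≤ n → ω n ∈ cone (letterWord (Sum.inl g))})).toReal) ∧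
    ∀ gx : Word α β o₁ o₂,
      gx.val = (letterWord (Sum.inl g) : Word α β o₁ o₂).val ++ x.val →
        S.a * 1 - U1real S gx (gSet g R) 1 =
          (S.μ gx (neverHit (gSet g R) ∩
            {ω | ∀ n, 1 ≤ n → ω n ∉ cone gx})).toReal := by
  classical
  haveI := countable_word S
  have ha0 : (0 : ℝ) ≤ S.a := le_of_lt S.a_mem.1
  have h1a : (0 : ℝ) ≤ 1 - S.a := by have := S.a_mem.2; linarith
  -- extract a witness trajectory
  obtain ⟨ω, hωR, hωT, hω0⟩ :
      ∃ ω : ℕ → Word α β o₁ o₂, Rnorm g ω = R ∧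
        (ω (Tk g ω 1)).val = (ω (Tk g ω 0)).val ++ x.val ∧ ω 0 = emptyWord := by
    by_contra hc
    push_neg at hc
    have hstart := measure_start_compl S (emptyWord : Word α β o₁ o₂)
    have hconull := measure_inter_conull (μ := S.μ emptyWord)
      (s := {ω : ℕ → Word α β o₁ o₂ |
        Rnorm g ω = R ∧ (ω (Tk g ω 1)).val = (ω (Tk g ω 0)).val ++ x.val}) hstart
    have hempty : {ω : ℕ → Word α β o₁ o₂ |
        Rnorm g ω = R ∧ (ω (Tk g ω 1)).val = (ω (Tk g ω 0)).val ++ x.val}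
        ∩ {ω : ℕ → Word α β o₁ o₂ | ω 0 = emptyWord} = ∅ := by
      ext ω
      simp only [Set.mem_inter_iff, Set.mem_setOf_eq, Set.mem_empty_iff_false, iff_false,
        not_and]
      intro hA hB
      exact hc ω hA.1 hA.2 hB
    rw [hempty, measure_empty] at hconull
    rw [← hconull] at hpos
    exact lt_irrefl 0 hpos
  -- structural facts about x
  have hxlast : x.val.getLast? = some (Sum.inl g) := hx.2.1
  have hxne : x.val ≠ [] := by
    intro h
    rw [h] at hxlast
    simp at hxlast
  have hxpos : 0 < x.val.length := List.length_pos_iff.mpr hxne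
  -- the two exit times
  have hlen1 : (ω (Tk g ω 1)).val.length = (ω (Tk g ω 0)).val.length + x.val.length := by
    rw [hωT, List.length_append]
  have he1ne : Tk g ω 1 ≠ 0 := by
    intro h
    rw [h, hω0] at hωT
    have := congrArg List.length hωT
    simp only [emptyWord, List.length_nil, List.length_append] at this
    omega
  have htau1 : tau g ω 1 ≠ 0 := by
    intro h
    apply he1ne
    show exitTime ω (tau g ω 1) = 0
    rw [h]
    rfl
  obtain ⟨k1, hk1⟩ := Nat.exists_eq_succ_of_ne_zero htau1
  have hE1 : Tk g ω 1 =
      sInf {m | 0 < m ∧ wlen (ω m) = k1 + 1 ∧ ∀ n ≥ m, ω n ∈ cone (ω m)} := by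
    show exitTime ω (tau g ω 1) = _
    rw [hk1]
    rfl
  have hne1 : {m | 0 < m ∧ wlen (ω m) = k1 + 1 ∧ ∀ n ≥ m, ω n ∈ cone (ω m)}.Nonempty := by
    by_contra hemp
    rw [Set.not_nonempty_iff_eq_empty] at hemp
    apply he1ne
    rw [hE1, hemp, Nat.sInf_empty]
  have hmem1 : Tk g ω 1 ∈
      {m | 0 < m ∧ wlen (ω m) = k1 + 1 ∧ ∀ n ≥ m, ω n ∈ cone (ω m)} := by
    rw [hE1]
    exact Nat.sInf_mem hne1
  have hcone1 : ∀ n, n ≥ Tk g ω 1 → ω n ∈ cone (ω (Tk g ω 1)) := fun n hn => hmem1.2.2 n hn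
  have he01 : Tk g ω 0 ≤ Tk g ω 1 := by
    by_contra hgt
    push_neg at hgt
    have hpre : (ω (Tk g ω 1)).val <+: (ω (Tk g ω 0)).val := hcone1 _ (le_of_lt hgt)
    have := hpre.length_le
    omega
  -- the three key facts about R
  have hfact1 : emptyWord ∈ R := by
    rw [← hωR]
    refine ⟨ω (Tk g ω 0), ⟨⟨Tk g ω 0, he01, rfl⟩, ⟨List.prefix_rfl, ?_⟩⟩,
      (List.append_nil _).symm⟩
    rintro ⟨hc1, -⟩
    have hpre : (ω (Tk g ω 1)).val <+: (ω (Tk g ω 0)).val := hc1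
    have := hpre.length_le
    omega
  have hfact2 : x ∈ R := by
    rw [← hωR]
    exact ⟨ω (Tk g ω 1), ⟨⟨Tk g ω 1, le_rfl, rfl⟩, ⟨⟨x.val, hωT.symm⟩, fun h => h.2 rfl⟩⟩, hωT⟩
  have hfact3 : ∀ w ∈ R, x.val <+: w.val → w = x := by
    intro w hw hpre
    rw [← hωR] at hw
    obtain ⟨u, hu, huval⟩ := hw
    have hconeu : u ∈ cone (ω (Tk g ω 1)) := by
      show (ω (Tk g ω 1)).val <+: u.val
      rw [huval, hωT]
      exact (List.prefix_append_right_inj _).mpr hpre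
    have hueq : u = ω (Tk g ω 1) := by
      by_contra hne
      exact hu.2.2 ⟨hconeu, hne⟩
    have hcc : (ω (Tk g ω 0)).val ++ w.val = (ω (Tk g ω 0)).val ++ x.val := by
      rw [← huval, hueq, hωT]
    exact Subtype.ext (List.append_cancel_left hcc)
  -- row sums
  have hrow1 : (∑' t : α, ENNReal.ofReal (S.p₁ g.val t)) = 1 := by
    rw [← ENNReal.ofReal_tsum_of_nonneg (S.p₁_nonneg g.val) (S.p₁_rowsum g.val).summable,
      (S.p₁_rowsum g.val).tsum_eq, ENNReal.ofReal_one]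
  have hrow2 : (∑' t : β, ENNReal.ofReal (S.p₂ o₂ t)) = 1 := by
    rw [← ENNReal.ofReal_tsum_of_nonneg (S.p₂_nonneg o₂) (S.p₂_rowsum o₂).summable,
      (S.p₂_rowsum o₂).tsum_eq, ENNReal.ofReal_one]
  have hgG : (letterWord (Sum.inl g) : Word α β o₁ o₂) ∈ gSet g R :=
    ⟨emptyWord, hfact1, rfl⟩
  constructor
  · -- part (i)
    haveI := S.μ_prob (letterWord (Sum.inl g) : Word α β o₁ o₂)
    have hy1val : (letterWord (Sum.inl g) : Word α β o₁ o₂).val = [] ++ [Sum.inl g] := rfl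
    have hlastnil : ∀ l ∈ ([] : List (Letter α β o₁ o₂)).getLast?, Letter.side l ≠ 1 := by
      simp
    have hy1last : (letterWord (Sum.inl g) : Word α β o₁ o₂).val.getLast?
        = some (Sum.inl g) := by simp [letterWord]
    set Ψ1 : α → Word α β o₁ o₂ :=
      fun t => ⟨[] ++ incl1 o₁ o₂ t, alt_append_incl1 List.isChain_nil hlastnil t⟩ with hΨ1
    set Ψ2 : β → Word α β o₁ o₂ :=
      fun t => ⟨(letterWord (Sum.inl g) : Word α β o₁ o₂).val ++ incl2 o₁ o₂ t,
        alt_append_incl2 (letterWord (Sum.inl g) : Word α β o₁ o₂).2 hy1last t⟩ with hΨ2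
    have hΨ1mem : ∀ t : α, Ψ1 t ∈ cone (letterWord (Sum.inl g)) ↔ t = g.val := by
      intro t
      show (letterWord (Sum.inl g) : Word α β o₁ o₂).val <+: ([] ++ incl1 o₁ o₂ t) ↔ _
      rw [List.nil_append]
      exact prefix_incl1_iff g t
    have hΨ2mem : ∀ t : β, Ψ2 t ∈ cone (letterWord (Sum.inl g)) := by
      intro t
      show (letterWord (Sum.inl g) : Word α β o₁ o₂).val <+:
        ((letterWord (Sum.inl g) : Word α β o₁ o₂).val ++ incl2 o₁ o₂ t)
      exact List.prefix_append _ _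
    have hmu1 : S.μ (letterWord (Sum.inl g))
        {ω' : ℕ → Word α β o₁ o₂ | ω' 0 = letterWord (Sum.inl g) ∧
          ω' 1 ∈ cone (letterWord (Sum.inl g))} = ENNReal.ofReal (1 - S.a) := by
      rw [measure_one_mem S _ (cone (letterWord (Sum.inl g))),
        sum_step_formula S g (letterWord (Sum.inl g)) ([] : List (Letter α β o₁ o₂))
          List.isChain_nil hy1val hlastnil
          Ψ1 (fun t => rfl) Ψ2 (fun t => rfl) (cone (letterWord (Sum.inl g)))]
      have hs1 : (∑' t : α, Set.indicator
          {t : α | Ψ1 t ∈ cone (letterWord (Sum.inl g))}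
          (fun t => ENNReal.ofReal (S.p₁ g.val t)) t) = 0 := by
        refine (tsum_congr fun t => ?_).trans tsum_zero
        by_cases ht : t = g.val
        · rw [Set.indicator_of_mem (show t ∈ {t : α | Ψ1 t ∈ cone (letterWord (Sum.inl g))}
              from (hΨ1mem t).mpr ht), ht, S.p₁_noloop, ENNReal.ofReal_zero]
        · exact Set.indicator_of_notMem
            (show t ∉ {t : α | Ψ1 t ∈ cone (letterWord (Sum.inl g))} from
              fun hm => ht ((hΨ1mem t).mp hm)) _
      have hs2 : (∑' t : β, Set.indicator
          {t : β | Ψ2 t ∈ cone (letterWord (Sum.inl g))}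
          (fun t => ENNReal.ofReal (S.p₂ o₂ t)) t) = 1 := by
        refine Eq.trans (tsum_congr fun t => Set.indicator_of_mem
          (show t ∈ {t : β | Ψ2 t ∈ cone (letterWord (Sum.inl g))} from hΨ2mem t) _) hrow2
      rw [hs1, hs2, mul_zero, zero_add, mul_one]
    have key1 : (∑' n : ℕ, S.μ (letterWord (Sum.inl g))
          {ω' : ℕ → Word α β o₁ o₂ | ω' (n+1) ∈ gSet g R ∧
            (∀ m, 1 ≤ m → m < n+1 → ω' m ∉ gSet g R) ∧
            ∀ m ≤ n+1, ω' m ∈ cone (letterWord (Sum.inl g))})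
        + S.μ (letterWord (Sum.inl g)) (neverHit (gSet g R) ∩
          {ω' : ℕ → Word α β o₁ o₂ | ∀ n, 1 ≤ n → ω' n ∈ cone (letterWord (Sum.inl g))}) =
        ENNReal.ofReal (1 - S.a) :=
      (partition1 S (letterWord (Sum.inl g)) (gSet g R) hgG).symm.trans hmu1
    have hfin1 : (∑' n : ℕ, S.μ (letterWord (Sum.inl g))
        {ω' : ℕ → Word α β o₁ o₂ | ω' (n+1) ∈ gSet g R ∧
          (∀ m, 1 ≤ m → m < n+1 → ω' m ∉ gSet g R) ∧
          ∀ m ≤ n+1, ω' m ∈ cone (letterWord (Sum.inl g))}) ≠ ⊤ := by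
      intro htop
      rw [htop, top_add] at key1
      exact ENNReal.ofReal_ne_top key1.symm
    have harith := congrArg ENNReal.toReal key1
    rw [ENNReal.toReal_add hfin1 (measure_ne_top _ _), ENNReal.toReal_ofReal h1a] at harith
    have hU0 : U0real S g (gSet g R) 1 = (∑' n : ℕ, S.μ (letterWord (Sum.inl g))
        {ω' : ℕ → Word α β o₁ o₂ | ω' (n+1) ∈ gSet g R ∧
          (∀ m, 1 ≤ m → m < n+1 → ω' m ∉ gSet g R) ∧
          ∀ m ≤ n+1, ω' m ∈ cone (letterWord (Sum.inl g))}).toReal := by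
      unfold U0real
      rw [ENNReal.tsum_toReal_eq (fun n => measure_ne_top _ _)]
      have hshift := Function.Injective.tsum_eq (g := Nat.succ) Nat.succ_injective
        (f := fun n : ℕ => (if 1 ≤ n then (S.μ (letterWord (Sum.inl g))
          {ω' : ℕ → Word α β o₁ o₂ | ω' n ∈ gSet g R ∧
            (∀ m, 1 ≤ m → m < n → ω' m ∉ gSet g R) ∧
            ∀ m ≤ n, ω' m ∈ cone (letterWord (Sum.inl g))}).toReal else 0) * 1 ^ n)
        (by
          intro n hn
          rcases Nat.eq_zero_or_pos n with rfl | hp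
          · exfalso
            apply hn
            simp
          · exact ⟨n - 1, by omega⟩)
      rw [← hshift]
      refine tsum_congr fun n => ?_
      have h1n : (1:ℕ) ≤ Nat.succ n := by omega
      simp only [h1n, if_true, one_pow, mul_one, if_pos]
    rw [hU0]
    linarith [harith]
  · -- part (ii)
    intro gx hgx
    haveI := S.μ_prob gx
    have hgxne : gx.val ≠ [] := by
      rw [hgx]
      simp [letterWord]
    have hgxlast : gx.val.getLast? = some (Sum.inl g) := by
      rw [hgx, List.getLast?_append_of_ne_nil _ hxne]
      exact hxlast
    have hgl : gx.val.getLast hgxne = Sum.inl g := by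
      have h1 := List.getLast?_eq_getLast (l := gx.val) hgxne
      rw [hgxlast] at h1
      exact (Option.some.inj h1).symm
    set w0l : List (Letter α β o₁ o₂) := gx.val.dropLast with hw0l
    have hyw0 : gx.val = w0l ++ [Sum.inl g] := by
      conv_lhs => rw [← List.dropLast_append_getLast hgxne]
      rw [hgl]
    have hch2 : List.Chain' (fun a b : Letter α β o₁ o₂ => Letter.side a ≠ Letter.side b)
        (w0l ++ [Sum.inl g]) := by
      rw [← hyw0]
      exact gx.2
    obtain ⟨hw0alt, -, hcompat⟩ := List.isChain_append.mp hch2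
    have hlastw0 : ∀ l ∈ w0l.getLast?, Letter.side l ≠ 1 := by
      intro l hl
      exact hcompat l hl (Sum.inl g) (by simp)
    have hw0alt' : Alternating w0l := hw0alt
    have hgxG : gx ∈ gSet g R := ⟨x, hfact2, hgx⟩
    have hGc : ∀ u ∈ gSet g R, u ∈ cone gx → u = gx := by
      rintro u ⟨w, hwR, hwval⟩ hco
      have hco' : gx.val <+: u.val := hco
      rw [hgx, hwval] at hco'
      have hxw : x.val <+: w.val := (List.prefix_append_right_inj [Sum.inl g]).mp hco'
      have hwx : w = x := hfact3 w hwR hxw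
      apply Subtype.ext
      rw [hwval, hwx, hgx]
      rfl
    set Φ1 : α → Word α β o₁ o₂ :=
      fun t => ⟨w0l ++ incl1 o₁ o₂ t, alt_append_incl1 hw0alt' hlastw0 t⟩ with hΦ1
    set Φ2 : β → Word α β o₁ o₂ :=
      fun t => ⟨gx.val ++ incl2 o₁ o₂ t, alt_append_incl2 gx.2 hgxlast t⟩ with hΦ2
    have hΦ1mem : ∀ t : α, Φ1 t ∈ cone gx ↔ t = g.val := by
      intro t
      show gx.val <+: (w0l ++ incl1 o₁ o₂ t) ↔ _
      rw [hyw0, List.prefix_append_right_inj]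
      exact prefix_incl1_iff g t
    have hΦ2mem : ∀ t : β, Φ2 t ∈ cone gx := by
      intro t
      show gx.val <+: (gx.val ++ incl2 o₁ o₂ t)
      exact List.prefix_append _ _
    have hmu2 : S.μ gx {ω' : ℕ → Word α β o₁ o₂ | ω' 0 = gx ∧ ω' 1 ∉ cone gx} =
        ENNReal.ofReal S.a := by
      have hset : {ω' : ℕ → Word α β o₁ o₂ | ω' 0 = gx ∧ ω' 1 ∉ cone gx} =
          {ω' : ℕ → Word α β o₁ o₂ | ω' 0 = gx ∧ ω' 1 ∈ (cone gx)ᶜ} := rfl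
      rw [hset, measure_one_mem S gx ((cone gx)ᶜ),
        sum_step_formula S g gx w0l hw0alt' hyw0 hlastw0 Φ1 (fun t => rfl) Φ2 (fun t => rfl)
          ((cone gx)ᶜ)]
      have hs1 : (∑' t : α, Set.indicator {t : α | Φ1 t ∈ (cone gx)ᶜ}
          (fun t => ENNReal.ofReal (S.p₁ g.val t)) t) = 1 := by
        refine Eq.trans (tsum_congr fun t => ?_) hrow1
        by_cases ht : t = g.val
        · rw [Set.indicator_of_notMem (show t ∉ {t : α | Φ1 t ∈ (cone gx)ᶜ} from
            fun hm => hm ((hΦ1mem t).mpr ht)), ht, S.p₁_noloop, ENNReal.ofReal_zero]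
        · exact Set.indicator_of_mem (show t ∈ {t : α | Φ1 t ∈ (cone gx)ᶜ} from
            fun hm => ht ((hΦ1mem t).mp hm)) _
      have hs2 : (∑' t : β, Set.indicator {t : β | Φ2 t ∈ (cone gx)ᶜ}
          (fun t => ENNReal.ofReal (S.p₂ o₂ t)) t) = 0 := by
        refine (tsum_congr fun t => ?_).trans tsum_zero
        exact Set.indicator_of_notMem
          (show t ∉ {t : β | Φ2 t ∈ (cone gx)ᶜ} from fun hm => hm (hΦ2mem t)) _
      rw [hs1, hs2, mul_zero, add_zero, mul_one]
    have key2 : (∑' n : ℕ, S.μ gx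
          {ω' : ℕ → Word α β o₁ o₂ | ω' (n+1) ∈ gSet g R ∧
            (∀ m, 1 ≤ m → m < n+1 → ω' m ∉ gSet g R) ∧
            ∀ m, 1 ≤ m → m < n+1 → ω' m ∉ cone gx})
        + S.μ gx (neverHit (gSet g R) ∩
          {ω' : ℕ → Word α β o₁ o₂ | ∀ n, 1 ≤ n → ω' n ∉ cone gx}) =
        ENNReal.ofReal S.a :=
      (partition2 S gx (gSet g R) hgxG hGc).symm.trans hmu2
    have hfin2 : (∑' n : ℕ, S.μ gx
        {ω' : ℕ → Word α β o₁ o₂ | ω' (n+1) ∈ gSet g R ∧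
          (∀ m, 1 ≤ m → m < n+1 → ω' m ∉ gSet g R) ∧
          ∀ m, 1 ≤ m → m < n+1 → ω' m ∉ cone gx}) ≠ ⊤ := by
      intro htop
      rw [htop, top_add] at key2
      exact ENNReal.ofReal_ne_top key2.symm
    have harith2 := congrArg ENNReal.toReal key2
    rw [ENNReal.toReal_add hfin2 (measure_ne_top _ _), ENNReal.toReal_ofReal ha0] at harith2
    have hU1 : U1real S gx (gSet g R) 1 = (∑' n : ℕ, S.μ gx
        {ω' : ℕ → Word α β o₁ o₂ | ω' (n+1) ∈ gSet g R ∧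
          (∀ m, 1 ≤ m → m < n+1 → ω' m ∉ gSet g R) ∧
          ∀ m, 1 ≤ m → m < n+1 → ω' m ∉ cone gx}).toReal := by
      unfold U1real
      rw [ENNReal.tsum_toReal_eq (fun n => measure_ne_top _ _)]
      have hshift := Function.Injective.tsum_eq (g := Nat.succ) Nat.succ_injective
        (f := fun n : ℕ => (if 1 ≤ n then (S.μ gx
          {ω' : ℕ → Word α β o₁ o₂ | ω' n ∈ gSet g R ∧
            (∀ m, 1 ≤ m → m < n → ω' m ∉ gSet g R) ∧
            ∀ m, 1 ≤ m → m < n → ω' m ∉ cone gx}).toReal else 0) * 1 ^ n)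
        (by
          intro n hn
          rcases Nat.eq_zero_or_pos n with rfl | hp
          · exfalso
            apply hn
            simp
          · exact ⟨n - 1, by omega⟩)
      rw [← hshift]
      refine tsum_congr fun n => ?_
      have h1n : (1:ℕ) ≤ Nat.succ n := by omega
      simp only [h1n, if_true, one_pow, mul_one, if_pos]
    rw [hU1]
    linarith [harith2]

end CapFP
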